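/- Let X ≥ 0 be regularly varying with index −α (α > 0) and Y > 0 independent of X with E[Y^p] < ∞ for all p > 0, and suppose P(X > t) = t^{−α} for t ≥ 1 (exact Pareto case). Then the product XY satisfies lim_{t→∞} P(XY > t)/P(X > t) = E[Y^α]; in particular XY is regularly varying with index −α. -/
import Mathlib
open MeasureTheory ProbabilityTheory Real Filter
open scoped ENNReal NNReal

lemma partition_measure {Ω : Type*} [MeasurableSpace Ω] (μ : Measure Ω)
    (B : ℤ → Set Ω) (hm : ∀ k, MeasurableSet (B k)) (hd : Pairwise (Function.onFun Disjoint B))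
    (hcov : (⋃ k, B k) = Set.univ) (S : Set Ω) :
    μ S = ∑' k, μ (S ∩ B k) := by
  refine le_antisymm ?_ ?_
  · calc μ S = μ (⋃ k, S ∩ B k) := by rw [← Set.inter_iUnion, hcov, Set.inter_univ]
    _ ≤ ∑' k, μ (S ∩ B k) := measure_iUnion_le _
  · calc ∑' k, μ (S ∩ B k) = ∑' k, (μ.restrict (B k)) S := by
          simp_rw [Measure.restrict_apply' (hm _)]
    _ ≤ (Measure.sum fun k => μ.restrict (B k)) S := Measure.le_sum_apply _ _
    _ = (μ.restrict (⋃ k, B k)) S := by rw [Measure.restrict_iUnion hd hm]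
    _ = μ S := by rw [hcov, Measure.restrict_univ]

lemma le_of_q_bounds {α : ℝ} (hα : 0 < α) {a b : ℝ≥0∞} (hb : b ≤ 1)
    (h : ∀ q : ℝ, 1 < q → a ≤ ENNReal.ofReal (q ^ α) * b) : a ≤ b := by
  refine ENNReal.le_of_forall_pos_le_add fun ε hε _ => ?_
  have hε' : (0:ℝ) < ε := hε
  set q : ℝ := (1 + (ε:ℝ)) ^ (α⁻¹ : ℝ) with hqdef
  have h1ε : (1:ℝ) < 1 + (ε:ℝ) := by linarith
  have hq : 1 < q := by
    rw [hqdef]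
    exact (Real.one_lt_rpow_iff_of_pos (by linarith)).2 (Or.inl ⟨h1ε, inv_pos.2 hα⟩)
  have hqα : q ^ α = 1 + (ε:ℝ) := by
    rw [hqdef, ← Real.rpow_mul (by linarith), inv_mul_cancel₀ hα.ne', Real.rpow_one]
  have h2 := h q hq
  rw [hqα] at h2
  calc a ≤ ENNReal.ofReal (1 + (ε:ℝ)) * b := h2
    _ = (1 + (ε:ℝ≥0∞)) * b := by
        rw [ENNReal.ofReal_add one_pos.le ε.coe_nonneg, ENNReal.ofReal_one,
          ENNReal.ofReal_coe_nnreal]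
    _ = b + (ε:ℝ≥0∞) * b := by ring
    _ ≤ b + (ε:ℝ≥0∞) * 1 := by gcongr
    _ = b + ε := by rw [mul_one]

lemma eq_of_q_bounds {α : ℝ} (hα : 0 < α) {a b : ℝ≥0∞} (ha : a ≤ 1) (hb : b ≤ 1)
    (h : ∀ q : ℝ, 1 < q → a ≤ ENNReal.ofReal (q ^ α) * b ∧ b ≤ ENNReal.ofReal (q ^ α) * a) :
    a = b :=
  le_antisymm (le_of_q_bounds hα hb fun q hq => (h q hq).1)
    (le_of_q_bounds hα ha fun q hq => (h q hq).2)

lemma phi_mono {α t : ℝ} (hα : 0 < α) (ht : 0 < t) {y z : ℝ} (hy : 0 ≤ y) (hyz : y ≤ z) :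
    min 1 ((y / t) ^ α) ≤ min 1 ((z / t) ^ α) :=
  min_le_min le_rfl (Real.rpow_le_rpow (div_nonneg hy ht.le) (by gcongr) hα.le)

lemma phi_growth {α t q : ℝ} (hα : 0 < α) (ht : 0 < t) (hq : 1 ≤ q) {y : ℝ} (hy : 0 ≤ y) :
    min 1 ((q * y / t) ^ α) ≤ q ^ α * min 1 ((y / t) ^ α) := by
  have hqα : 1 ≤ q ^ α := Real.one_le_rpow hq hα.le
  have h1 : (q * y / t) ^ α = q ^ α * (y / t) ^ α := by
    rw [mul_div_assoc, Real.mul_rpow (by linarith) (div_nonneg hy ht.le)]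
  rw [h1]
  rcases le_total ((y / t) ^ α) 1 with h | h
  · rw [min_eq_right h]
    exact min_le_right _ _
  · calc min 1 (q ^ α * (y / t) ^ α) ≤ 1 := min_le_left _ _
      _ ≤ q ^ α * min 1 ((y / t) ^ α) := by rw [min_eq_left h]; simpa using hqα

/-- Breiman's lemma (exact Pareto case): if `X` is Pareto with `P(X > t) = t^{−α}`
for `t ≥ 1`, and `Y > 0` is independent of `X` with all positive moments finite, then
`P(XY > t)/P(X > t) → E[Y^α]`; in particular `XY` is regularly varying with index `−α`. -/
theorem breiman_pareto_product
    {Ω : Type*} [MeasurableSpace Ω] (P : Measure Ω) [IsProbabilityMeasure P]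
    (X Y : Ω → ℝ) (α : ℝ) (hα : 0 < α)
    (hX1 : P {ω | 1 ≤ X ω} = 1)
    (hsurv : ∀ t : ℝ, 1 ≤ t → (P {ω | X ω > t}).toReal = t ^ (-α))
    (hYpos : ∀ ω, 0 < Y ω)
    (hindep : IndepFun X Y P)
    (hmom : ∀ p : ℝ, 0 < p → Integrable (fun ω => Y ω ^ p) P) :
    Tendsto (fun t : ℝ =>
        (P {ω | X ω * Y ω > t}).toReal / (P {ω | X ω > t}).toReal)
      atTop (nhds (∫ ω, Y ω ^ α ∂P)) ∧
    ∀ x : ℝ, 0 < x →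
      Tendsto (fun t : ℝ =>
          (P {ω | X ω * Y ω > t * x}).toReal / (P {ω | X ω * Y ω > t}).toReal)
        atTop (nhds (x ^ (-α))) := by
  -- a measurable, everywhere-positive version of Y
  have hYm : AEStronglyMeasurable Y P := by
    have := (hmom 1 one_pos).aestronglyMeasurable
    simpa [Real.rpow_one] using this
  have hY'meas : StronglyMeasurable (hYm.mk Y) := hYm.stronglyMeasurable_mk
  have hYY' : Y =ᵐ[P] hYm.mk Y := hYm.ae_eq_mk
  set Z : Ω → ℝ := fun ω => if 0 < hYm.mk Y ω then hYm.mk Y ω else 1 with hZdef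
  have hZmeas : Measurable Z :=
    Measurable.ite (measurableSet_lt measurable_const hY'meas.measurable)
      hY'meas.measurable measurable_const
  have hZpos : ∀ ω, 0 < Z ω := by
    intro ω
    by_cases h : 0 < hYm.mk Y ω <;> simp [hZdef, h]
  have hYZ : Y =ᵐ[P] Z := by
    filter_upwards [hYY'] with ω h
    have h0 : 0 < hYm.mk Y ω := h ▸ hYpos ω
    simp only [hZdef, if_pos h0]
    exact h
  -- survival function of X
  have hsurv' : ∀ s : ℝ, 0 < s → P {ω | X ω > s} = ENNReal.ofReal (min 1 (s ^ (-α))) := by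
    intro s hs
    rcases lt_or_ge s 1 with h | h
    · have h1 : P {ω | X ω > s} = 1 := by
        refine le_antisymm prob_le_one ?_
        rw [← hX1]
        exact measure_mono fun ω hω => lt_of_lt_of_le h hω
      have h2 : (1:ℝ) ≤ s ^ (-α) :=
        Real.one_le_rpow_of_pos_of_le_one_of_nonpos hs h.le (neg_nonpos.2 hα.le)
      rw [h1, min_eq_left h2, ENNReal.ofReal_one]
    · have hne : P {ω | X ω > s} ≠ ⊤ := measure_ne_top _ _
      have h2 : s ^ (-α) ≤ 1 := Real.rpow_le_one_of_one_le_of_nonpos h (neg_nonpos.2 hα.le)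
      rw [min_eq_right h2, ← hsurv s h, ENNReal.ofReal_toReal hne]
  have ht0' : ∀ t : ℝ, 1 ≤ t → (0:ℝ) < t := fun t ht => lt_of_lt_of_le one_pos ht
  have hXdiv : ∀ t : ℝ, 1 ≤ t → ∀ y : ℝ, 0 < y →
      P {ω | X ω > t / y} = ENNReal.ofReal (min 1 ((y / t) ^ α)) := by
    intro t ht y hy
    have ht0 : (0:ℝ) < t := ht0' t ht
    have hts : 0 < t / y := div_pos ht0 hy
    rw [hsurv' _ hts]
    congr 2
    have e : (y / t) = (t / y)⁻¹ := (inv_div t y).symm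
    rw [e, Real.inv_rpow hts.le, ← Real.rpow_neg hts.le]
  -- independence transferred to Z
  have hindep' : ∀ s : ℝ, ∀ I : Set ℝ, MeasurableSet I →
      P ({ω | X ω > s} ∩ Z ⁻¹' I) = P {ω | X ω > s} * P (Z ⁻¹' I) := by
    intro s I hI
    have hZI : (Z ⁻¹' I : Set Ω) =ᵐ[P] (Y ⁻¹' I : Set Ω) := by
      apply Filter.eventuallyEq_set.2
      filter_upwards [hYZ] with ω h
      simp [Set.mem_preimage, h]
    have hZI2 : ({ω | X ω > s} ∩ Z ⁻¹' I : Set Ω) =ᵐ[P] ({ω | X ω > s} ∩ Y ⁻¹' I : Set Ω) := by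
      apply Filter.eventuallyEq_set.2
      filter_upwards [hYZ] with ω h
      simp [Set.mem_preimage, Set.mem_inter_iff, h]
    rw [measure_congr hZI2, measure_congr hZI]
    exact hindep.measure_inter_preimage_eq_mul _ _ measurableSet_Ioi hI
  have hphi_meas : ∀ t : ℝ, Measurable fun ω => ENNReal.ofReal (min 1 ((Z ω / t) ^ α)) :=
    fun t => (measurable_const.min ((hZmeas.div_const t).pow measurable_const)).ennreal_ofReal
  -- the key identity
  have key : ∀ t : ℝ, 1 ≤ t →
      P {ω | X ω * Y ω > t} = ∫⁻ ω, ENNReal.ofReal (min 1 ((Z ω / t) ^ α)) ∂P := by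
    intro t ht
    have ht0 : (0:ℝ) < t := ht0' t ht
    have hSz : P {ω | X ω * Y ω > t} = P {ω | X ω * Z ω > t} := by
      apply measure_congr
      apply Filter.eventuallyEq_set.2
      filter_upwards [hYZ] with ω h
      simp [Set.mem_setOf_eq, h]
    rw [hSz]
    set S : Set Ω := {ω | X ω * Z ω > t} with hSdef
    set b : ℝ≥0∞ := ∫⁻ ω, ENNReal.ofReal (min 1 ((Z ω / t) ^ α)) ∂P with hbdef
    have hb1 : b ≤ 1 := by
      calc b ≤ ∫⁻ _, 1 ∂P := lintegral_mono fun ω =>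
              ENNReal.ofReal_le_one.2 (min_le_left _ _)
        _ = 1 := by simp
    refine eq_of_q_bounds hα prob_le_one hb1 fun q hq => ?_
    have hq0 : (0:ℝ) < q := lt_trans one_pos hq
    set B : ℤ → Set Ω := fun k => Z ⁻¹' (Set.Ico (q ^ k) (q ^ (k+1))) with hBdef
    have hBm : ∀ k, MeasurableSet (B k) := fun k => hZmeas measurableSet_Ico
    have hBdis : ∀ {k j : ℤ}, k < j → Disjoint (B k) (B j) := by
      intro k j hkj
      refine Set.disjoint_left.2 fun ω hk hj => ?_
      have h1 : Z ω < q ^ (k+1) := hk.2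
      have h2 : q ^ j ≤ Z ω := hj.1
      have h3 : (q:ℝ) ^ (k+1) ≤ q ^ j := zpow_le_zpow_right₀ hq.le (by omega)
      linarith
    have hBd : Pairwise (Function.onFun Disjoint B) := by
      intro k j hkj
      rcases hkj.lt_or_gt with h | h
      · exact hBdis h
      · exact (hBdis h).symm
    have hBcov : (⋃ k, B k) = Set.univ := by
      refine Set.eq_univ_iff_forall.2 fun ω => ?_
      obtain ⟨n, hn⟩ := exists_mem_Ico_zpow (hZpos ω) hq
      exact Set.mem_iUnion.2 ⟨n, hn⟩
    have hval : ∀ (s : ℝ) (k : ℤ), 0 < s →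
        P ({ω | X ω > t / s} ∩ B k) = ENNReal.ofReal (min 1 ((s / t) ^ α)) * P (B k) := by
      intro s k hs
      rw [hBdef, hindep' (t/s) _ measurableSet_Ico, hXdiv t ht s hs]
    have hsub1 : ∀ k : ℤ, ({ω | X ω > t / q ^ k} ∩ B k) ⊆ S ∩ B k := by
      rintro k ω ⟨h1, h2⟩
      refine ⟨?_, h2⟩
      have hk : q ^ k ≤ Z ω := h2.1
      have hqk : (0:ℝ) < q ^ k := zpow_pos hq0 k
      have hX0 : 0 < X ω := lt_trans (div_pos ht0 hqk) h1
      have h4 : t < X ω * q ^ k := (div_lt_iff₀ hqk).1 h1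
      have : t < X ω * Z ω := by nlinarith
      exact this
    have hsub2 : ∀ k : ℤ, S ∩ B k ⊆ ({ω | X ω > t / q ^ (k+1)} ∩ B k) := by
      rintro k ω ⟨h1, h2⟩
      refine ⟨?_, h2⟩
      have hk : Z ω < q ^ (k+1) := h2.2
      have hqk : (0:ℝ) < q ^ (k+1) := zpow_pos hq0 _
      have hz : 0 < Z ω := hZpos ω
      have h1' : t < X ω * Z ω := h1
      have hX0 : 0 < X ω := by nlinarith
      have h4 : t < X ω * q ^ (k+1) := by nlinarith
      exact (div_lt_iff₀ hqk).2 h4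
    have hchain1 : P S ≤ ∑' k, ENNReal.ofReal (min 1 ((q^(k+1) / t) ^ α)) * P (B k) := by
      rw [partition_measure P B hBm hBd hBcov S]
      refine ENNReal.tsum_le_tsum fun k => ?_
      calc P (S ∩ B k) ≤ P ({ω | X ω > t / q ^ (k+1)} ∩ B k) := measure_mono (hsub2 k)
        _ = _ := hval _ k (zpow_pos hq0 _)
    have hchain2 : ∑' k, ENNReal.ofReal (min 1 ((q^k / t) ^ α)) * P (B k) ≤ P S := by
      rw [partition_measure P B hBm hBd hBcov S]
      refine ENNReal.tsum_le_tsum fun k => ?_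
      rw [← hval _ k (zpow_pos hq0 _)]
      exact measure_mono (hsub1 k)
    have hbsplit : b = ∑' k, ∫⁻ ω in B k, ENNReal.ofReal (min 1 ((Z ω / t) ^ α)) ∂P := by
      rw [hbdef, ← lintegral_iUnion hBm hBd, hBcov, Measure.restrict_univ]
    have hchain3 : ∑' k, ENNReal.ofReal (min 1 ((q^k / t) ^ α)) * P (B k) ≤ b := by
      rw [hbsplit]
      refine ENNReal.tsum_le_tsum fun k => ?_
      calc ENNReal.ofReal (min 1 ((q^k / t) ^ α)) * P (B k)
          = ∫⁻ _ω in B k, ENNReal.ofReal (min 1 ((q^k / t) ^ α)) ∂P := by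
            rw [setLIntegral_const]
        _ ≤ ∫⁻ ω in B k, ENNReal.ofReal (min 1 ((Z ω / t) ^ α)) ∂P :=
            setLIntegral_mono (hphi_meas t) fun ω hω =>
              ENNReal.ofReal_le_ofReal (phi_mono hα ht0 (zpow_pos hq0 k).le hω.1)
    have hchain4 : b ≤ ∑' k, ENNReal.ofReal (min 1 ((q^(k+1) / t) ^ α)) * P (B k) := by
      rw [hbsplit]
      refine ENNReal.tsum_le_tsum fun k => ?_
      calc ∫⁻ ω in B k, ENNReal.ofReal (min 1 ((Z ω / t) ^ α)) ∂P
          ≤ ∫⁻ _ω in B k, ENNReal.ofReal (min 1 ((q^(k+1) / t) ^ α)) ∂P :=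
            setLIntegral_mono measurable_const fun ω hω =>
              ENNReal.ofReal_le_ofReal (phi_mono hα ht0 (hZpos ω).le hω.2.le)
        _ = _ := by rw [setLIntegral_const]
    have hgrow : ∀ k : ℤ, ENNReal.ofReal (min 1 ((q^(k+1) / t) ^ α)) ≤
        ENNReal.ofReal (q ^ α) * ENNReal.ofReal (min 1 ((q^k / t) ^ α)) := by
      intro k
      rw [← ENNReal.ofReal_mul (Real.rpow_nonneg hq0.le α)]
      apply ENNReal.ofReal_le_ofReal
      have e : (q:ℝ) ^ (k+1) = q * q ^ k := by
        rw [zpow_add_one₀ hq0.ne']; ring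
      rw [e]
      exact phi_growth hα ht0 hq.le (zpow_pos hq0 k).le
    have hqmul : ∑' k, ENNReal.ofReal (min 1 ((q^(k+1) / t) ^ α)) * P (B k) ≤
        ENNReal.ofReal (q ^ α) * ∑' k, ENNReal.ofReal (min 1 ((q^k / t) ^ α)) * P (B k) := by
      rw [← ENNReal.tsum_mul_left]
      refine ENNReal.tsum_le_tsum fun k => ?_
      rw [← mul_assoc]
      exact mul_le_mul_left (hgrow k) _
    constructor
    · calc P S ≤ _ := hchain1
        _ ≤ _ := hqmul
        _ ≤ ENNReal.ofReal (q ^ α) * b := mul_le_mul_right hchain3 _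
    · calc b ≤ _ := hchain4
        _ ≤ _ := hqmul
        _ ≤ ENNReal.ofReal (q ^ α) * P S := mul_le_mul_right hchain2 _
  -- real-valued version
  have hint : ∀ t : ℝ, 1 ≤ t →
      (P {ω | X ω * Y ω > t}).toReal = ∫ ω, min 1 ((Z ω / t) ^ α) ∂P := by
    intro t ht
    have ht0 : (0:ℝ) < t := ht0' t ht
    rw [key t ht]
    rw [integral_eq_lintegral_of_nonneg_ae
      (Eventually.of_forall fun ω =>
        le_min zero_le_one (Real.rpow_nonneg (div_nonneg (hZpos ω).le ht0.le) α))
      ((measurable_const.min ((hZmeas.div_const t).pow measurable_const)).aestronglyMeasurable)]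
  -- integrability of Z^α
  have hZint : Integrable (fun ω => Z ω ^ α) P := by
    refine (hmom α hα).congr ?_
    filter_upwards [hYZ] with ω h
    rw [h]
  have hLeq : ∫ ω, Z ω ^ α ∂P = ∫ ω, Y ω ^ α ∂P := by
    refine integral_congr_ae ?_
    filter_upwards [hYZ] with ω h
    rw [h]
  have hLpos : 0 < ∫ ω, Y ω ^ α ∂P := by
    rw [← hLeq]
    refine (integral_pos_iff_support_of_nonneg
      (fun ω => Real.rpow_nonneg (hZpos ω).le α) hZint).2 ?_
    have hsupp : Function.support (fun ω => Z ω ^ α) = Set.univ :=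
      Set.eq_univ_iff_forall.2 fun ω => (Real.rpow_pos_of_pos (hZpos ω) α).ne'
    rw [hsupp]
    simp
  -- the main limit: t^α * P(XY > t) → E[Y^α]
  have main : Tendsto (fun t : ℝ => t ^ α * (P {ω | X ω * Y ω > t}).toReal)
      atTop (nhds (∫ ω, Y ω ^ α ∂P)) := by
    have hdom : Tendsto (fun t : ℝ => ∫ ω, min (t ^ α) (Z ω ^ α) ∂P)
        atTop (nhds (∫ ω, Z ω ^ α ∂P)) := by
      refine tendsto_integral_filter_of_dominated_convergence (fun ω => Z ω ^ α)
        (Eventually.of_forall fun t =>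
          (measurable_const.min (hZmeas.pow measurable_const)).aestronglyMeasurable)
        ?_ hZint ?_
      · filter_upwards [eventually_ge_atTop (1:ℝ)] with t ht
        refine Eventually.of_forall fun ω => ?_
        have h1 : 0 ≤ min (t ^ α) (Z ω ^ α) :=
          le_min (Real.rpow_nonneg (by linarith) α) (Real.rpow_nonneg (hZpos ω).le α)
        rw [Real.norm_eq_abs, abs_of_nonneg h1]
        exact min_le_right _ _
      · refine Eventually.of_forall fun ω => ?_
        refine tendsto_const_nhds.congr' ?_
        filter_upwards [eventually_ge_atTop (Z ω)] with t ht
        exact (min_eq_right (Real.rpow_le_rpow (hZpos ω).le ht hα.le)).symm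
    rw [← hLeq]
    refine Tendsto.congr' ?_ hdom
    filter_upwards [eventually_ge_atTop (1:ℝ)] with t ht
    have ht0 : (0:ℝ) < t := lt_of_lt_of_le one_pos ht
    rw [hint t ht, ← integral_const_mul]
    refine integral_congr_ae (Eventually.of_forall fun ω => ?_)
    have h1 : t ^ α * min 1 ((Z ω / t) ^ α) = min (t ^ α * 1) (t ^ α * ((Z ω / t) ^ α)) :=
      mul_min_of_nonneg _ _ (Real.rpow_nonneg ht0.le α)
    have h2 : t ^ α * ((Z ω / t) ^ α) = Z ω ^ α := by
      rw [← Real.mul_rpow ht0.le (div_nonneg (hZpos ω).le ht0.le)]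
      congr 1
      field_simp
    show t ^ α ⊓ Z ω ^ α = t ^ α * (1 ⊓ (Z ω / t) ^ α)
    rw [h1, h2, mul_one]
  refine ⟨?_, ?_⟩
  · -- part 1
    refine Tendsto.congr' ?_ main
    filter_upwards [eventually_ge_atTop (1:ℝ)] with t ht
    have ht0 : (0:ℝ) < t := lt_of_lt_of_le one_pos ht
    rw [hsurv t ht, Real.rpow_neg ht0.le, div_inv_eq_mul, mul_comm]
  · -- part 2
    intro x hx
    set L := ∫ ω, Y ω ^ α ∂P with hLdef
    set g : ℝ → ℝ := fun t => (P {ω | X ω * Y ω > t}).toReal with hgdef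
    have h2 : Tendsto (fun t : ℝ => (t * x) ^ α * g (t * x)) atTop (nhds L) :=
      main.comp (tendsto_id.atTop_mul_const hx)
    have h3 : Tendsto (fun t : ℝ => ((t * x) ^ α * g (t * x)) / (t ^ α * g t))
        atTop (nhds (L / L)) := h2.div main hLpos.ne'
    rw [div_self hLpos.ne'] at h3
    have h4 := h3.mul_const (x ^ (-α))
    rw [one_mul] at h4
    refine Tendsto.congr' ?_ h4
    filter_upwards [eventually_gt_atTop (0:ℝ)] with t ht0
    have hA : (t:ℝ) ^ α ≠ 0 := (Real.rpow_pos_of_pos ht0 α).ne'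
    have hc : x ^ α * x ^ (-α) = 1 := by
      rw [← Real.rpow_add hx]
      simp
    calc ((t * x) ^ α * g (t * x)) / (t ^ α * g t) * x ^ (-α)
        = (t ^ α * (x ^ α * g (t * x))) / (t ^ α * g t) * x ^ (-α) := by
          rw [Real.mul_rpow ht0.le hx.le]; ring_nf
      _ = (x ^ α * g (t * x)) / g t * x ^ (-α) := by rw [mul_div_mul_left _ _ hA]
      _ = g (t * x) / g t * (x ^ α * x ^ (-α)) := by ring
      _ = g (t * x) / g t := by rw [hc, mul_one]
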